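/- Let n ≥ 2 and equip ℝⁿ with the Minkowski form g; call an affine line ℓ = {r + λ·v : λ ∈ ℝ} timelike (slow) iff g(v, v) > 0. If F : ℝⁿ → ℝⁿ is a bijection such that the image F(ℓ) of every timelike line ℓ is again a timelike line, then F is an affine map. -/

import Mathlib

/-- The Minkowski bilinear form of signature `(1, n-1)` on `ℝⁿ`:
`g v w = v⁰w⁰ - ∑_{i=1}^{n-1} vⁱwⁱ`. -/
noncomputable def minkG {n : ℕ} (v w : Fin n → ℝ) : ℝ :=
  ∑ i : Fin n, if (i : ℕ) = 0 then v i * w i else -(v i * w i)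

namespace TLPA

variable {n : ℕ}

lemma minkG_comm (v w : Fin n → ℝ) : minkG v w = minkG w v := by
  unfold minkG; congr 1; ext i; split <;> ring

lemma minkG_add_left (u v w : Fin n → ℝ) :
    minkG (u + v) w = minkG u w + minkG v w := by
  unfold minkG; rw [← Finset.sum_add_distrib]; congr 1; ext i
  simp only [Pi.add_apply]; split <;> ring

lemma minkG_smul_left (c : ℝ) (v w : Fin n → ℝ) :
    minkG (c • v) w = c * minkG v w := by
  unfold minkG; rw [Finset.mul_sum]; congr 1; ext i
  simp only [Pi.smul_apply, smul_eq_mul]; split <;> ring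

lemma minkG_smul_right (c : ℝ) (v w : Fin n → ℝ) :
    minkG v (c • w) = c * minkG v w := by
  rw [minkG_comm, minkG_smul_left, minkG_comm]

lemma minkG_zero_left (w : Fin n → ℝ) : minkG 0 w = 0 := by
  unfold minkG
  simp

lemma minkG_neg_neg (v : Fin n → ℝ) : minkG (-v) (-v) = minkG v v := by
  have : (-v) = (-1 : ℝ) • v := by ext i; simp
  rw [this, minkG_smul_left, minkG_smul_right]; ring

lemma minkG_sub_left (u v w : Fin n → ℝ) :
    minkG (u - v) w = minkG u w - minkG v w := by
  have h := minkG_add_left (u - v) v w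
  rw [sub_add_cancel] at h; linarith

lemma minkG_sub_right (u v w : Fin n → ℝ) :
    minkG u (v - w) = minkG u v - minkG u w := by
  rw [minkG_comm, minkG_sub_left, minkG_comm v u, minkG_comm w u]

lemma minkG_add_right (u v w : Fin n → ℝ) :
    minkG u (v + w) = minkG u v + minkG u w := by
  rw [minkG_comm, minkG_add_left, minkG_comm v u, minkG_comm w u]

lemma timelike_ne_zero {v : Fin n → ℝ} (h : 0 < minkG v v) : v ≠ 0 := by
  rintro rfl; rw [minkG_zero_left] at h; exact lt_irrefl _ h

lemma minkG_self_le (x : Fin (n+1) → ℝ) : minkG x x ≤ x 0 * x 0 := by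
  unfold minkG
  rw [← Finset.add_sum_erase _ _ (Finset.mem_univ (0 : Fin (n+1)))]
  simp only [Fin.val_zero, if_true]
  have : ∀ i ∈ Finset.univ.erase (0 : Fin (n+1)),
      (if (i : ℕ) = 0 then x i * x i else -(x i * x i)) ≤ 0 := by
    intro i hi
    rw [Finset.mem_erase] at hi
    rw [if_neg (by intro h; exact hi.1 (Fin.ext h))]
    nlinarith [sq_nonneg (x i)]
  nlinarith [Finset.sum_nonpos this]

lemma timelike_fst_ne {x : Fin (n+1) → ℝ} (h : 0 < minkG x x) : x 0 ≠ 0 := by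
  intro h0
  have := minkG_self_le x
  rw [h0] at this; nlinarith


/-- two timelike vectors are never `minkG`-orthogonal -/
lemma minkG_cross_ne {u v : Fin (n+1) → ℝ} (hu : 0 < minkG u u) (hv : 0 < minkG v v) :
    minkG u v ≠ 0 := by
  intro h0
  set w : Fin (n+1) → ℝ := (v 0) • u - (u 0) • v with hw
  have hw0 : w 0 = 0 := by simp [hw]; ring
  have hle : minkG w w ≤ 0 := by
    have := minkG_self_le w; rw [hw0] at this; linarith
  have hexp : minkG w w = (v 0)^2 * minkG u u + (u 0)^2 * minkG v v := by
    simp only [hw, minkG_sub_left, minkG_sub_right, minkG_smul_left, minkG_smul_right,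
      minkG_comm v u, h0]
    ring
  have hu0 : u 0 ≠ 0 := timelike_fst_ne hu
  have hsq : 0 < u 0 ^ 2 := by positivity
  nlinarith [mul_pos hsq hv, mul_nonneg (sq_nonneg (v 0)) hu.le]

lemma quad_large (A B C : ℝ) (hA : 0 < A) :
    ∃ T₀ : ℝ, 1 ≤ T₀ ∧ ∀ T, T₀ ≤ T → 0 < A * T^2 + 2*B*T + C := by
  refine ⟨max 1 ((2*|B| + |C| + 1)/A), le_max_left _ _, fun T hT => ?_⟩
  have h1 : (1:ℝ) ≤ T := le_trans (le_max_left _ _) hT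
  have h2 : (2*|B| + |C| + 1)/A ≤ T := le_trans (le_max_right _ _) hT
  have h3 : 2*|B| + |C| + 1 ≤ A * T := by
    rw [div_le_iff₀ hA] at h2; linarith
  have hB := abs_nonneg B; have hC := abs_nonneg C
  have hb1 := le_abs_self B; have hb2 := neg_abs_le B
  have hc1 := le_abs_self C; have hc2 := neg_abs_le C
  nlinarith [sq_nonneg T, mul_le_mul_of_nonneg_right h3 (by linarith : (0:ℝ) ≤ T)]

lemma timelike_large {e : Fin n → ℝ} (he : 0 < minkG e e) (x : Fin n → ℝ) :
    ∃ T₀ : ℝ, 1 ≤ T₀ ∧ ∀ T, T₀ ≤ T → 0 < minkG (T • e + x) (T • e + x) := by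
  obtain ⟨T₀, h1, h⟩ := quad_large (minkG e e) (minkG e x) (minkG x x) he
  refine ⟨T₀, h1, fun T hT => ?_⟩
  have hexp : minkG (T • e + x) (T • e + x)
      = minkG e e * T^2 + 2 * minkG e x * T + minkG x x := by
    simp only [minkG_add_left, minkG_add_right, minkG_smul_left, minkG_smul_right,
      minkG_comm x e]
    ring
  rw [hexp]; exact h T hT

lemma timelike_small {v : Fin n → ℝ} (hv : 0 < minkG v v) (w : Fin n → ℝ) :
    ∃ ε : ℝ, 0 < ε ∧ ∀ δ : ℝ, |δ| ≤ ε → 0 < minkG (v + δ • w) (v + δ • w) := by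
  set A := minkG v v
  set B := minkG v w
  set C := minkG w w
  refine ⟨min 1 (A/(2*|B| + |C| + 1)), lt_min one_pos (by positivity), fun δ hδ => ?_⟩
  have hexp : minkG (v + δ • w) (v + δ • w) = A + 2*B*δ + C*δ^2 := by
    simp only [minkG_add_left, minkG_add_right, minkG_smul_left, minkG_smul_right,
      minkG_comm w v]
    ring
  rw [hexp]
  have h1 : |δ| ≤ 1 := le_trans hδ (min_le_left _ _)
  have h2 : |δ| ≤ A/(2*|B| + |C| + 1) := le_trans hδ (min_le_right _ _)
  have hpos : (0:ℝ) < 2*|B| + |C| + 1 := by positivity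
  have h3 : |δ| * (2*|B| + |C| + 1) ≤ A := by
    rw [le_div_iff₀ hpos] at h2; linarith
  have habs : δ^2 ≤ |δ| := by nlinarith [abs_nonneg δ, sq_abs δ]
  have k1 : |2*B*δ| = 2*|B| * |δ| := by rw [abs_mul, abs_mul, abs_two]
  have k1' := neg_abs_le (2*B*δ)
  have k2 : |C*δ^2| = |C| *δ^2 := by rw [abs_mul, abs_pow, sq_abs]
  have k2' := neg_abs_le (C*δ^2)
  have k3 : |C| *δ^2 ≤ |C| * |δ| := mul_le_mul_of_nonneg_left habs (abs_nonneg C)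
  rcases eq_or_ne δ 0 with rfl | hne
  · simpa using hv
  · have : 0 < |δ| := abs_pos.mpr hne
    nlinarith


def Indep (u v : Fin n → ℝ) : Prop := ∀ a b : ℝ, a • u + b • v = 0 → a = 0 ∧ b = 0

lemma Indep.symm {u v : Fin n → ℝ} (h : Indep u v) : Indep v u := by
  intro a b hab
  have := h b a (by rw [← hab]; abel)
  exact ⟨this.2, this.1⟩

lemma Indep.ne_zero_left {u v : Fin n → ℝ} (h : Indep u v) : u ≠ 0 := by
  intro h0
  have := h 1 0 (by simp [h0])
  exact one_ne_zero this.1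

lemma Indep.ne_zero_right {u v : Fin n → ℝ} (h : Indep u v) : v ≠ 0 :=
  h.symm.ne_zero_left

lemma indep_of_not_smul {u v : Fin n → ℝ} (hu : u ≠ 0) (h : ∀ c : ℝ, v ≠ c • u) :
    Indep u v := by
  intro a b hab
  rcases eq_or_ne b 0 with rfl | hb
  · rw [zero_smul, add_zero, smul_eq_zero] at hab
    exact ⟨hab.resolve_right hu, rfl⟩
  · exfalso
    have h2 : b • v = (-a) • u := by
      have h3 : b • v = -(a • u) := by
        rw [eq_neg_iff_add_eq_zero, add_comm]; exact hab
      rw [h3, neg_smul]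
    have : v = (b⁻¹ * (-a)) • u := by
      rw [← smul_smul, ← h2, smul_smul, inv_mul_cancel₀ hb, one_smul]
    exact h _ this

lemma exists_smul_of_not_indep {u v : Fin n → ℝ} (h : ¬ Indep u v) (hu : u ≠ 0) :
    ∃ c : ℝ, v = c • u := by
  by_contra hc
  push_neg at hc
  exact h (indep_of_not_smul hu hc)

/-- the `k`-th standard basis vector -/
def eb (n k : ℕ) : Fin n → ℝ := fun i => if (i : ℕ) = k then 1 else 0

variable {m : ℕ}

lemma eb_apply_self (k : ℕ) (hk : k < m + 2) :
    eb (m+2) k ⟨k, hk⟩ = 1 := by simp [eb]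

lemma minkG_eb00 : minkG (eb (m+2) 0) (eb (m+2) 0) = 1 := by
  unfold minkG
  rw [Finset.sum_eq_single (0 : Fin (m+2))]
  · simp [eb]
  · intro i _ hi
    have : (i : ℕ) ≠ 0 := by intro h; exact hi (Fin.ext h)
    simp [eb, this]
  · simp

lemma minkG_eb11 : minkG (eb (m+2) 1) (eb (m+2) 1) = -1 := by
  unfold minkG
  rw [Finset.sum_eq_single (1 : Fin (m+2))]
  · simp [eb]
  · intro i _ hi
    have : (i : ℕ) ≠ 1 := by simpa [Fin.ext_iff] using hi
    simp [eb, this]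
  · simp

lemma minkG_eb01 : minkG (eb (m+2) 0) (eb (m+2) 1) = 0 := by
  unfold minkG
  apply Finset.sum_eq_zero
  intro i _
  rcases eq_or_ne (i : ℕ) 0 with h | h
  · simp [eb, h]
  · simp [eb, h]

/-- the second candidate direction `e₀ + (1/2) e₁` -/
noncomputable def d2v (m : ℕ) : Fin (m+2) → ℝ := eb (m+2) 0 + (1/2 : ℝ) • eb (m+2) 1

lemma minkG_d2v : minkG (d2v m) (d2v m) = 3/4 := by
  unfold d2v
  simp only [minkG_add_left, minkG_add_right, minkG_smul_left, minkG_smul_right,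
    minkG_eb00, minkG_eb11, minkG_eb01, minkG_comm (eb (m+2) 1) (eb (m+2) 0)]
  norm_num

lemma eb0_val0 : eb (m+2) 0 (0 : Fin (m+2)) = 1 := by simp [eb]
lemma eb0_val1 : eb (m+2) 0 (1 : Fin (m+2)) = 0 := by simp [eb, Fin.val_one]
lemma eb1_val0 : eb (m+2) 1 (0 : Fin (m+2)) = 0 := by simp [eb]
lemma eb1_val1 : eb (m+2) 1 (1 : Fin (m+2)) = 1 := by simp [eb, Fin.val_one]

lemma indep_eb0_eb1 : Indep (eb (m+2) 0) (eb (m+2) 1) := by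
  intro a b hab
  have h0 := congrFun hab (0 : Fin (m+2))
  have h1 := congrFun hab (1 : Fin (m+2))
  simp [eb0_val0, eb1_val0, eb0_val1, eb1_val1] at h0 h1
  exact ⟨h0, h1⟩

/-- generic decomposition: a timelike `s` with `p - s` timelike, both independent of `q` -/
lemma gen_decomp (p q : Fin (m+2) → ℝ) (hq : q ≠ 0) :
    ∃ s : Fin (m+2) → ℝ, 0 < minkG s s ∧ 0 < minkG (p - s) (p - s) ∧
      Indep s q ∧ Indep (p - s) q := by
  -- first, find a timelike direction d with d ∉ ℝq
  obtain ⟨d, hd, hdq⟩ : ∃ d : Fin (m+2) → ℝ, 0 < minkG d d ∧ ∀ c : ℝ, d ≠ c • q := by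
    by_cases h0 : ∀ c : ℝ, eb (m+2) 0 ≠ c • q
    · exact ⟨eb (m+2) 0, by rw [minkG_eb00]; norm_num, h0⟩
    · push_neg at h0
      obtain ⟨c, hc⟩ := h0
      refine ⟨d2v m, by rw [minkG_d2v]; norm_num, fun c' hc' => ?_⟩
      have hcne : c ≠ 0 := by
        rintro rfl; rw [zero_smul] at hc
        have := congrFun hc (0 : Fin (m+2)); rw [eb0_val0] at this
        simpa using this
      -- then e₁ would be a multiple of q as well, contradiction with independence
      have hq' : q = c⁻¹ • eb (m+2) 0 := by
        rw [hc, smul_smul, inv_mul_cancel₀ hcne, one_smul]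
      rw [hq', smul_smul] at hc'
      unfold d2v at hc'
      have := indep_eb0_eb1 (m := m) (1 - c' * c⁻¹) (1/2)
        (by linear_combination (norm := module) hc')
      norm_num at this
  -- thresholds
  have hdneg : 0 < minkG (-d) (-d) := by rw [minkG_neg_neg]; exact hd
  obtain ⟨T₀, hT₀1, hT₀⟩ := timelike_large hdneg p
  -- at most one bad T
  have key : ∀ T : ℝ, T₀ ≤ T → 0 < minkG (T • d) (T • d) ∧ 0 < minkG (p - T • d) (p - T • d) := by
    intro T hT
    constructor
    · rw [minkG_smul_left, minkG_smul_right]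
      have hTpos : (0:ℝ) < T := lt_of_lt_of_le (by linarith) hT
      positivity
    · have := hT₀ T hT
      have he : T • (-d) + p = p - T • d := by rw [smul_neg]; abel
      rwa [he] at this
  have hone : ∀ T T' : ℝ, T ≠ T' → (∃ c : ℝ, p - T • d = c • q) → (∃ c : ℝ, p - T' • d = c • q) → False := by
    rintro T T' hTT ⟨c, hc⟩ ⟨c', hc'⟩
    have hdd : (T' - T) • d = (c - c') • q := by
      linear_combination (norm := module) hc - hc'
    have hTT' : T' - T ≠ 0 := sub_ne_zero.mpr hTT.symm
    refine hdq ((T' - T)⁻¹ * (c - c')) ?_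
    rw [← smul_smul, ← hdd, smul_smul, inv_mul_cancel₀ hTT', one_smul]
  have good : ∃ T : ℝ, T₀ ≤ T ∧ ∀ c : ℝ, p - T • d ≠ c • q := by
    by_cases hb1 : ∃ c : ℝ, p - (T₀+1) • d = c • q
    · exact ⟨T₀+2, by linarith, fun c hc =>
        hone (T₀+1) (T₀+2) (by norm_num) hb1 ⟨c, hc⟩⟩
    · push_neg at hb1
      exact ⟨T₀+1, by linarith, hb1⟩
  obtain ⟨T, hTle, hTgood⟩ := good
  have hT1 : (1:ℝ) ≤ T := le_trans hT₀1 hTle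
  have hTne : T ≠ 0 := by linarith
  refine ⟨T • d, (key T hTle).1, (key T hTle).2, ?_, ?_⟩
  · refine (indep_of_not_smul hq fun c hc => ?_).symm
    refine hdq (T⁻¹ * c) ?_
    rw [← smul_smul, ← hc, smul_smul, inv_mul_cancel₀ hTne, one_smul]
  · exact (indep_of_not_smul hq hTgood).symm


def lineS (r v : Fin n → ℝ) : Set (Fin n → ℝ) := {x | ∃ lam : ℝ, x = r + lam • v}

lemma mem_lineS (r v : Fin n → ℝ) (lam : ℝ) : r + lam • v ∈ lineS r v := ⟨lam, rfl⟩

lemma self_mem_lineS (r v : Fin n → ℝ) : r ∈ lineS r v := ⟨0, by simp⟩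

lemma lineS_shift (r v : Fin n → ℝ) (c : ℝ) : lineS (r + c • v) v = lineS r v := by
  ext x
  constructor
  · rintro ⟨lam, rfl⟩; exact ⟨c + lam, by module⟩
  · rintro ⟨lam, rfl⟩; exact ⟨lam - c, by module⟩

lemma lineS_scale (r v : Fin n → ℝ) {c : ℝ} (hc : c ≠ 0) : lineS r (c • v) = lineS r v := by
  ext x
  constructor
  · rintro ⟨lam, rfl⟩; exact ⟨lam * c, by module⟩
  · rintro ⟨lam, rfl⟩; exact ⟨lam / c, by rw [smul_smul]; rw [div_mul_cancel₀ _ hc]⟩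

lemma lineS_param_inj {r v : Fin n → ℝ} (hv : v ≠ 0) {a b : ℝ}
    (h : r + a • v = r + b • v) : a = b := by
  have h2 : (a - b) • v = 0 := by linear_combination (norm := module) h
  rcases smul_eq_zero.mp h2 with h3 | h3
  · linarith [sub_eq_zero.mp (by linarith : a - b = 0)]
  · exact absurd h3 hv

/-- a line through two of its distinct points -/
lemma lineS_two_point {r v a b : Fin n → ℝ} (hv : v ≠ 0)
    (ha : a ∈ lineS r v) (hb : b ∈ lineS r v) (hab : a ≠ b) :
    lineS r v = lineS a (b - a) := by
  obtain ⟨s, rfl⟩ := ha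
  obtain ⟨t, rfl⟩ := hb
  have hst : t - s ≠ 0 := by
    intro h
    exact hab (by rw [sub_eq_zero.mp h])
  have hdiff : (r + t • v) - (r + s • v) = (t - s) • v := by module
  rw [hdiff, lineS_scale _ _ hst, lineS_shift]


/-- linear independence from distinctness of lines through a common point -/
lemma indep_of_line_ne {p d1 d2 : Fin n → ℝ} (h1 : d1 ≠ 0) (h2 : d2 ≠ 0)
    (hne : lineS p d1 ≠ lineS p d2) : Indep d1 d2 := by
  intro a b hab
  rcases eq_or_ne a 0 with rfl | ha
  · rw [zero_smul, zero_add, smul_eq_zero] at hab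
    exact ⟨rfl, hab.resolve_right h2⟩
  · exfalso
    have hd1 : d1 = (a⁻¹ * (-b)) • d2 := by
      have h3 : a • d1 = (-b) • d2 := by linear_combination (norm := module) hab
      rw [← smul_smul, ← h3, smul_smul, inv_mul_cancel₀ ha, one_smul]
    have hc : a⁻¹ * (-b) ≠ 0 := by
      intro h0; rw [h0, zero_smul] at hd1; exact h1 hd1
    exact hne (by rw [hd1, lineS_scale _ _ hc])

/-- Cramer: anything in the "span" of `d1, d2` is a combination of two
independent vectors in that span -/
lemma cramer {d1 d2 x y z : Fin n → ℝ} (hxy : Indep x y)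
    (x1 x2 y1 y2 z1 z2 : ℝ)
    (hx : x = x1 • d1 + x2 • d2) (hy : y = y1 • d1 + y2 • d2)
    (hz : z = z1 • d1 + z2 • d2) :
    ∃ α β : ℝ, z = α • x + β • y := by
  have hdet : x1 * y2 - x2 * y1 ≠ 0 := by
    intro hdet0
    have h5 : y2 • x + (-x2) • y = (x1 * y2 - x2 * y1) • d1 := by
      rw [hx, hy]; module
    rw [hdet0, zero_smul] at h5
    obtain ⟨hy2, hx2⟩ := hxy y2 (-x2) h5
    rw [neg_eq_zero] at hx2
    have h6 : y1 • x + (-x1) • y = (y1 * x2 - x1 * y2) • d2 := by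
      rw [hx, hy]; module
    rw [hx2, hy2] at h6
    simp only [mul_zero, zero_mul, sub_zero, zero_sub, zero_smul, neg_zero] at h6
    obtain ⟨hy1, hx1⟩ := hxy y1 (-x1) h6
    rw [neg_eq_zero] at hx1
    exact hxy.ne_zero_left (by rw [hx, hx1, hx2, zero_smul, zero_smul, add_zero])
  refine ⟨(z1 * y2 - z2 * y1) / (x1 * y2 - x2 * y1),
          (x1 * z2 - x2 * z1) / (x1 * y2 - x2 * y1), ?_⟩
  rw [hx, hy, hz]
  match_scalars
  · rw [div_mul_eq_mul_div, div_mul_eq_mul_div, ← add_div, eq_div_iff hdet]; ring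
  · rw [div_mul_eq_mul_div, div_mul_eq_mul_div, ← add_div, eq_div_iff hdet]; ring


section WithF
variable {m : ℕ} (F : (Fin (m + 2) → ℝ) ≃ (Fin (m + 2) → ℝ))
  (hF : ∀ r v : Fin (m + 2) → ℝ, 0 < minkG v v →
      ∃ r' v' : Fin (m + 2) → ℝ, 0 < minkG v' v' ∧
        F '' lineS r v = lineS r' v')

include hF in
/-- **key lemma**: timelike segments map to timelike segments spanning the image line -/
lemma key_lemma (a b : Fin (m+2) → ℝ) (h : 0 < minkG (b - a) (b - a)) :
    0 < minkG (F b - F a) (F b - F a) ∧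
      F '' lineS a (b - a) = lineS (F a) (F b - F a) := by
  obtain ⟨r', v', hv', himg⟩ := hF a (b - a) h
  have hba : b - a ≠ 0 := timelike_ne_zero h
  have hab : a ≠ b := fun h' => hba (by rw [h', sub_self])
  have hv'0 : v' ≠ 0 := timelike_ne_zero hv'
  have haim : F a ∈ lineS r' v' := by
    rw [← himg]; exact ⟨a, self_mem_lineS a _, rfl⟩
  have hbim : F b ∈ lineS r' v' := by
    rw [← himg]
    exact ⟨b, ⟨1, by module⟩, rfl⟩
  have hFab : F a ≠ F b := fun h' => hab (F.injective h')
  have hline : lineS r' v' = lineS (F a) (F b - F a) :=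
    lineS_two_point hv'0 haim hbim hFab
  obtain ⟨s, hs⟩ := haim
  obtain ⟨t, ht⟩ := hbim
  have hdiff : F b - F a = (t - s) • v' := by rw [hs, ht]; module
  have hts : t - s ≠ 0 := by
    intro h'
    rw [h', zero_smul, sub_eq_zero] at hdiff
    exact hFab hdiff.symm
  constructor
  · rw [hdiff, minkG_smul_left, minkG_smul_right]
    have : 0 < (t - s)^2 := by positivity
    nlinarith
  · rw [himg, hline]


include hF in
/-- the image of an affine plane containing a timelike direction lies in a
2-parameter family -/
lemma plane_image (p v w : Fin (m+2) → ℝ) (hv : 0 < minkG v v) (hiw : Indep v w) :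
    ∃ d1 d2 : Fin (m+2) → ℝ, Indep d1 d2 ∧
      (d1 = F (p + v) - F p) ∧ (F '' lineS p v = lineS (F p) d1) ∧
      ∀ α β : ℝ, ∃ γ δ : ℝ, F (p + α • v + β • w) = F p + γ • d1 + δ • d2 := by
  obtain ⟨ε₀, hε₀, hε⟩ := timelike_small hv w
  set u₂ : Fin (m+2) → ℝ := v + ε₀ • w with hu₂def
  have hu₂ : 0 < minkG u₂ u₂ := hε ε₀ (by rw [abs_of_pos hε₀])
  have hk1 := key_lemma F hF p (p + v) (by rw [add_sub_cancel_left]; exact hv)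
  rw [add_sub_cancel_left] at hk1
  have hk2 := key_lemma F hF p (p + u₂) (by rw [add_sub_cancel_left]; exact hu₂)
  rw [add_sub_cancel_left] at hk2
  set d1 := F (p + v) - F p with hd1def
  set d2 := F (p + u₂) - F p with hd2def
  have hd1 : d1 ≠ 0 := timelike_ne_zero hk1.1
  have hd2 : d2 ≠ 0 := timelike_ne_zero hk2.1
  have hvne : v ≠ 0 := timelike_ne_zero hv
  have hlineNe : lineS p v ≠ lineS p u₂ := by
    intro heq
    have hmem : p + u₂ ∈ lineS p v := by
      rw [heq]; exact ⟨1, by module⟩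
    obtain ⟨lam, hlam⟩ := hmem
    have : (1 - lam) • v + ε₀ • w = 0 := by
      rw [hu₂def] at hlam
      linear_combination (norm := module) hlam
    exact absurd (hiw _ _ this).2 (ne_of_gt hε₀)
  have hD : Indep d1 d2 := by
    apply indep_of_line_ne hd1 hd2
    intro heq
    rw [← hk1.2, ← hk2.2] at heq
    exact hlineNe (Set.image_eq_image F.injective |>.mp heq)
  refine ⟨d1, d2, hD, rfl, hk1.2, ?_⟩
  intro α β
  by_cases h00 : α = 0 ∧ β = 0
  · refine ⟨0, 0, ?_⟩
    rw [h00.1, h00.2]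
    simp
  -- choose a good slope δ
  obtain ⟨δ, hδpos, hδlt, hδ3⟩ : ∃ δ : ℝ, 0 < δ ∧ δ < ε₀ ∧ α * δ ≠ β := by
    by_cases hc : α * (ε₀/2) = β
    · refine ⟨ε₀/3, by linarith, by linarith, fun h => ?_⟩
      have hα : α = 0 := by
        have : α * (ε₀/6) = 0 := by linarith
        rcases mul_eq_zero.mp this with h' | h'
        · exact h'
        · linarith
      exact h00 ⟨hα, by rw [hα] at hc; linarith⟩
    · exact ⟨ε₀/2, by linarith, by linarith, hc⟩
  have hδne : δ ≠ 0 := ne_of_gt hδpos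
  have hδε : δ - ε₀ ≠ 0 := by intro h; linarith [sub_eq_zero.mp h]
  set x : Fin (m+2) → ℝ := p + α • v + β • w with hxdef
  set dx : Fin (m+2) → ℝ := v + δ • w with hdxdef
  have hdx : 0 < minkG dx dx := hε δ (by rw [abs_of_pos hδpos]; linarith)
  have hdxne : dx ≠ 0 := timelike_ne_zero hdx
  set γ₁ : ℝ := α - β / δ with hγ₁def
  set t : ℝ := (α * δ - β) / (δ - ε₀) with htdef
  set p' : Fin (m+2) → ℝ := p + γ₁ • v with hp'def
  set p'' : Fin (m+2) → ℝ := p + t • u₂ with hp''def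
  set s₁ : ℝ := -β / δ with hs₁def
  set s₂ : ℝ := t - α with hs₂def
  have hp'x : p' = x + s₁ • dx := by
    rw [hp'def, hxdef, hdxdef, hγ₁def, hs₁def]
    match_scalars <;> (field_simp; try ring)
  have hp''x : p'' = x + s₂ • dx := by
    rw [hp''def, hxdef, hdxdef, hu₂def, hs₂def, htdef]
    match_scalars <;> field_simp <;> ring
  have hpp : p' ≠ p'' := by
    intro heq
    have hcomb : (γ₁ - t) • v + (-(t * ε₀)) • w = 0 := by
      rw [hp'def, hp''def, hu₂def] at heq
      linear_combination (norm := module) heq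
    obtain ⟨h1, h2⟩ := hiw _ _ hcomb
    rw [neg_eq_zero] at h2
    have ht0 : t = 0 := by
      rcases mul_eq_zero.mp h2 with h' | h'
      · exact h'
      · linarith
    have : α * δ - β = t * (δ - ε₀) := by
      rw [htdef]; field_simp; try ring
    rw [ht0, zero_mul] at this
    exact hδ3 (by linarith)
  have hs12 : s₂ - s₁ ≠ 0 := by
    intro h
    apply hpp
    rw [hp'x, hp''x, sub_eq_zero.mp h]
  have hppdiff : p'' - p' = (s₂ - s₁) • dx := by
    rw [hp'x, hp''x]; module
  have hpptime : 0 < minkG (p'' - p') (p'' - p') := by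
    rw [hppdiff, minkG_smul_left, minkG_smul_right]
    have : 0 < (s₂ - s₁)^2 := by positivity
    nlinarith
  have hk3 := key_lemma F hF p' p'' hpptime
  -- x is on the line through p' and p''
  have hxline : x ∈ lineS p' (p'' - p') := by
    have h1 : lineS x dx = lineS p' (p'' - p') :=
      lineS_two_point hdxne ⟨s₁, hp'x⟩ ⟨s₂, hp''x⟩ hpp
    rw [← h1]; exact self_mem_lineS x dx
  have hFx : F x ∈ lineS (F p') (F p'' - F p') := by
    rw [← hk3.2]; exact ⟨x, hxline, rfl⟩
  obtain ⟨lam, hlam⟩ := hFx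
  -- coordinates of F p' and F p''
  have hFp' : F p' ∈ lineS (F p) d1 := by
    rw [← hk1.2]; exact ⟨p', ⟨γ₁, rfl⟩, rfl⟩
  have hFp'' : F p'' ∈ lineS (F p) d2 := by
    rw [← hk2.2]; exact ⟨p'', ⟨t, rfl⟩, rfl⟩
  obtain ⟨c₁, hc₁⟩ := hFp'
  obtain ⟨c₂, hc₂⟩ := hFp''
  refine ⟨c₁ - lam * c₁, lam * c₂, ?_⟩
  rw [hlam, hc₁, hc₂]
  module


include hF in
/-- parallel timelike lines have parallel images -/
lemma par_lemma (a b v : Fin (m+2) → ℝ) (hv : 0 < minkG v v)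
    (hind : Indep v (b - a)) :
    ∃ c : ℝ, c ≠ 0 ∧ F (b + v) - F b = c • (F (a + v) - F a) := by
  obtain ⟨d1, d2, hD, hd1eq, himg1, hQ⟩ := plane_image F hF a v (b - a) hv hind
  have hka := key_lemma F hF a (a + v) (by rw [add_sub_cancel_left]; exact hv)
  rw [add_sub_cancel_left] at hka
  have hkb := key_lemma F hF b (b + v) (by rw [add_sub_cancel_left]; exact hv)
  rw [add_sub_cancel_left] at hkb
  set da := F (a + v) - F a with hdadef
  set db := F (b + v) - F b with hdbdef
  have hdane : da ≠ 0 := timelike_ne_zero hka.1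
  have hdbne : db ≠ 0 := timelike_ne_zero hkb.1
  by_cases hdep : Indep da db
  case neg =>
    obtain ⟨c, hc⟩ := exists_smul_of_not_indep hdep hdane
    refine ⟨c, fun h0 => ?_, hc⟩
    rw [h0, zero_smul] at hc; exact hdbne hc
  exfalso
  obtain ⟨γ1, δ1, h1⟩ := hQ 1 0
  obtain ⟨γ2, δ2, h2⟩ := hQ 0 1
  obtain ⟨γ3, δ3, h3⟩ := hQ 1 1
  rw [show a + (1:ℝ) • v + (0:ℝ) • (b - a) = a + v by module] at h1
  rw [show a + (0:ℝ) • v + (1:ℝ) • (b - a) = b by module] at h2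
  rw [show a + (1:ℝ) • v + (1:ℝ) • (b - a) = b + v by module] at h3
  have hda : da = γ1 • d1 + δ1 • d2 := by linear_combination (norm := module) h1
  have hz : F b - F a = γ2 • d1 + δ2 • d2 := by linear_combination (norm := module) h2
  have hdb : db = (γ3 - γ2) • d1 + (δ3 - δ2) • d2 := by
    linear_combination (norm := module) h3 - h2
  obtain ⟨α, β, hαβ⟩ := cramer hdep γ1 δ1 (γ3 - γ2) (δ3 - δ2) γ2 δ2 hda hdb hz
  have hy0 : F a + α • da = F b + (-β) • db := by
    linear_combination (norm := module) -hαβ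
  -- the two image lines would intersect, but the preimage lines are disjoint
  have hmem1 : F a + α • da ∈ F '' lineS a v := by
    rw [hka.2]; exact ⟨α, rfl⟩
  have hmem2 : F a + α • da ∈ F '' lineS b v := by
    rw [hkb.2, hy0]; exact ⟨-β, rfl⟩
  obtain ⟨x₁, hx₁, hfx₁⟩ := hmem1
  obtain ⟨x₂, hx₂, hfx₂⟩ := hmem2
  have hx12 : x₁ = x₂ := F.injective (by rw [hfx₁, hfx₂])
  obtain ⟨s, hs⟩ := hx₁
  obtain ⟨t, ht⟩ := hx₂
  have hcomb : (s - t) • v + (-1 : ℝ) • (b - a) = 0 := by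
    rw [hx12] at hs
    rw [ht] at hs
    linear_combination (norm := module) -hs
  have := (hind _ _ hcomb).2
  norm_num at this

include hF in
/-- parallelogram law -/
lemma pgram (a b c : Fin (m+2) → ℝ)
    (hb : 0 < minkG (b - a) (b - a)) (hc : 0 < minkG (c - a) (c - a))
    (hind : Indep (b - a) (c - a)) :
    F (b + c - a) = F b + F c - F a := by
  obtain ⟨k₁, hk₁0, hk₁⟩ := par_lemma F hF a c (b - a) hb hind
  obtain ⟨k₂, hk₂0, hk₂⟩ := par_lemma F hF a b (c - a) hc hind.symm
  rw [show a + (b - a) = b by module] at hk₁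
  rw [show c + (b - a) = b + c - a by module] at hk₁
  rw [show a + (c - a) = c by module] at hk₂
  rw [show b + (c - a) = b + c - a by module] at hk₂
  have hkb := key_lemma F hF a b hb
  have hkc := key_lemma F hF a c hc
  have hXY : Indep (F b - F a) (F c - F a) := by
    apply indep_of_line_ne (timelike_ne_zero hkb.1) (timelike_ne_zero hkc.1)
    intro heq
    rw [← hkb.2, ← hkc.2] at heq
    have hpre : lineS a (b - a) = lineS a (c - a) :=
      Set.image_eq_image F.injective |>.mp heq
    have hbmem : b ∈ lineS a (c - a) := by
      rw [← hpre]; exact ⟨1, by module⟩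
    obtain ⟨μ, hμ⟩ := hbmem
    have : (1:ℝ) • (b - a) + (-μ) • (c - a) = 0 := by
      linear_combination (norm := module) hμ
    have := (hind _ _ this).1
    norm_num at this
  have hcomb : (k₁ - 1) • (F b - F a) + (1 - k₂) • (F c - F a) = 0 := by
    linear_combination (norm := module) hk₂ - hk₁
  obtain ⟨e1, e2⟩ := hXY _ _ hcomb
  have hk₁1 : k₁ = 1 := by linarith [sub_eq_zero.mp e1]
  rw [hk₁1, one_smul] at hk₁
  linear_combination (norm := module) hk₁

include hF in
lemma add_timelike (p q : Fin (m+2) → ℝ) (hq : 0 < minkG q q) :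
    F (p + q) = F p + F q - F 0 := by
  obtain ⟨s, hs, hps, hsq, hpsq⟩ := gen_decomp p q (timelike_ne_zero hq)
  have h1 := pgram F hF s p (s + q) hps
    (by rw [add_sub_cancel_left]; exact hq)
    (by rw [add_sub_cancel_left]; exact hpsq)
  rw [show p + (s + q) - s = p + q by module] at h1
  have h2 := pgram F hF 0 s q
    (by rw [sub_zero]; exact hs) (by rw [sub_zero]; exact hq)
    (by rw [sub_zero, sub_zero]; exact hsq)
  rw [show s + q - 0 = s + q by module] at h2
  linear_combination (norm := module) h1 + h2

include hF in
lemma F_add (x y : Fin (m+2) → ℝ) : F (x + y) = F x + F y - F 0 := by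
  have he0 : 0 < minkG (eb (m+2) 0) (eb (m+2) 0) := by rw [minkG_eb00]; norm_num
  have hneg : 0 < minkG (-(eb (m+2) 0)) (-(eb (m+2) 0)) := by
    rw [minkG_neg_neg]; exact he0
  obtain ⟨T₀, hT₀1, hT⟩ := timelike_large hneg y
  set u : Fin (m+2) → ℝ := T₀ • eb (m+2) 0 with hudef
  set w : Fin (m+2) → ℝ := y - u with hwdef
  have hu : 0 < minkG u u := by
    rw [hudef, minkG_smul_left, minkG_smul_right, minkG_eb00]
    nlinarith
  have hw : 0 < minkG w w := by
    have := hT T₀ le_rfl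
    rw [show T₀ • (-(eb (m+2) 0)) + y = w by rw [hwdef, hudef]; module] at this
    exact this
  have h1 : F (x + y) = F (x + u) + F w - F 0 := by
    rw [show x + y = (x + u) + w by rw [hwdef]; module]
    exact add_timelike F hF (x + u) w hw
  have h2 : F (x + u) = F x + F u - F 0 := add_timelike F hF x u hu
  have h3 : F (u + w) = F u + F w - F 0 := add_timelike F hF u w hw
  rw [show u + w = y by rw [hwdef]; module] at h3
  linear_combination (norm := module) h1 + h2 - h3


include hF in
lemma key0 (v : Fin (m+2) → ℝ) (hv : 0 < minkG v v) :
    0 < minkG (F v - F 0) (F v - F 0) ∧ F '' lineS 0 v = lineS (F 0) (F v - F 0) := by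
  have h := key_lemma F hF 0 v (by rwa [sub_zero])
  rwa [sub_zero] at h

/-- the scaling function along direction `v` -/
noncomputable def phiF (F : (Fin (m + 2) → ℝ) ≃ (Fin (m + 2) → ℝ))
    (v : Fin (m+2) → ℝ) (lam : ℝ) : ℝ :=
  Classical.epsilon fun μ => F (lam • v) = F 0 + μ • (F v - F 0)

include hF in
lemma phiF_spec (v : Fin (m+2) → ℝ) (hv : 0 < minkG v v) (lam : ℝ) :
    F (lam • v) = F 0 + phiF F v lam • (F v - F 0) := by
  have h := key0 F hF v hv
  have hmem : F (lam • v) ∈ lineS (F 0) (F v - F 0) := by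
    rw [← h.2]
    exact ⟨lam • v, ⟨lam, by module⟩, rfl⟩
  obtain ⟨μ, hμ⟩ := hmem
  exact Classical.epsilon_spec (⟨μ, hμ⟩ :
    ∃ μ', F (lam • v) = F 0 + μ' • (F v - F 0))

include hF in
lemma dv_ne (v : Fin (m+2) → ℝ) (hv : 0 < minkG v v) : F v - F 0 ≠ 0 :=
  timelike_ne_zero (key0 F hF v hv).1

include hF in
lemma phiF_unique (v : Fin (m+2) → ℝ) (hv : 0 < minkG v v) (lam μ : ℝ)
    (h : F (lam • v) = F 0 + μ • (F v - F 0)) : phiF F v lam = μ := by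
  have hs := phiF_spec F hF v hv lam
  rw [h] at hs
  exact (lineS_param_inj (dv_ne F hF v hv) hs.symm)

include hF in
lemma phiF_one (v : Fin (m+2) → ℝ) (hv : 0 < minkG v v) : phiF F v 1 = 1 :=
  phiF_unique F hF v hv 1 1 (by rw [one_smul, one_smul]; module)

include hF in
lemma phiF_zero (v : Fin (m+2) → ℝ) (hv : 0 < minkG v v) : phiF F v 0 = 0 :=
  phiF_unique F hF v hv 0 0 (by rw [zero_smul, zero_smul]; simp)

include hF in
lemma phiF_add (v : Fin (m+2) → ℝ) (hv : 0 < minkG v v) (s t : ℝ) :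
    phiF F v (s + t) = phiF F v s + phiF F v t := by
  apply phiF_unique F hF v hv
  have h1 := phiF_spec F hF v hv s
  have h2 := phiF_spec F hF v hv t
  have h3 := F_add F hF (s • v) (t • v)
  rw [show s • v + t • v = (s + t) • v by module] at h3
  rw [h3, h1, h2]
  module

include hF in
lemma indep_d (u v : Fin (m+2) → ℝ) (hu : 0 < minkG u u) (hv : 0 < minkG v v)
    (hind : Indep u v) : Indep (F u - F 0) (F v - F 0) := by
  apply indep_of_line_ne (dv_ne F hF u hu) (dv_ne F hF v hv)
  intro heq
  rw [← (key0 F hF u hu).2, ← (key0 F hF v hv).2] at heq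
  have hpre : lineS 0 u = lineS 0 v := Set.image_eq_image F.injective |>.mp heq
  have : v ∈ lineS 0 u := by rw [hpre]; exact ⟨1, by module⟩
  obtain ⟨lam, hlam⟩ := this
  have := (hind lam (-1) (by linear_combination (norm := module) -hlam)).2
  norm_num at this

include hF in
/-- scaling functions agree along adjacent timelike directions -/
lemma phiF_eq_adj (u v : Fin (m+2) → ℝ) (hu : 0 < minkG u u) (hv : 0 < minkG v v)
    (hind : Indep u v) (hvu : 0 < minkG (v - u) (v - u)) (t : ℝ) :
    phiF F u t = phiF F v t := by
  rcases eq_or_ne t 0 with rfl | ht0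
  · rw [phiF_zero F hF u hu, phiF_zero F hF v hv]
  rcases eq_or_ne t 1 with rfl | ht1
  · rw [phiF_one F hF u hu, phiF_one F hF v hv]
  have hind' : Indep (v - u) (t • u - u) := by
    intro a b h'
    have := hind (b * (t - 1) - a) a (by linear_combination (norm := module) h')
    refine ⟨this.2, ?_⟩
    have h4 : b * (t - 1) = 0 := by
      have h5 := this.1
      have h6 := this.2
      rw [h6] at h5; linarith
    rcases mul_eq_zero.mp h4 with h5 | h5
    · exact h5
    · exact absurd (by linarith : t = 1) ht1
  obtain ⟨k, hk0, hk⟩ := par_lemma F hF u (t • u) (v - u) hvu hind'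
  rw [show u + (v - u) = v by module] at hk
  have hkey := key_lemma F hF (t • u) (t • u + (v - u))
    (by rw [add_sub_cancel_left]; exact hvu)
  rw [add_sub_cancel_left] at hkey
  have himg : F '' lineS (t • u) (v - u) = lineS (F (t • u)) (F v - F u) := by
    rw [hkey.2, hk, lineS_scale _ _ hk0]
  have htv : F (t • v) ∈ lineS (F (t • u)) (F v - F u) := by
    rw [← himg]
    exact ⟨t • v, ⟨t, by module⟩, rfl⟩
  obtain ⟨μ, hμ⟩ := htv
  have hsu := phiF_spec F hF u hu t
  have hsv := phiF_spec F hF v hv t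
  have hcomb : (phiF F v t - μ) • (F v - F 0) + (μ - phiF F u t) • (F u - F 0) = 0 := by
    rw [hsu] at hμ
    rw [hsv] at hμ
    linear_combination (norm := module) hμ
  have hD := indep_d F hF u v hu hv hind
  have := hD.symm _ _ hcomb
  have e1 : phiF F v t = μ := by linarith [this.1, sub_eq_zero.mp (by linarith [this.1] : phiF F v t - μ = 0)]
  have e2 : phiF F u t = μ := by linarith [this.2]
  rw [e1, e2]

include hF in
lemma phiF_neg_dir (u : Fin (m+2) → ℝ) (hu : 0 < minkG u u) (t : ℝ) :
    phiF F (-u) t = phiF F u t := by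
  have hnu : 0 < minkG (-u) (-u) := by rwa [minkG_neg_neg]
  apply phiF_unique F hF (-u) hnu
  have h1 := phiF_spec F hF u hu (-t)
  have h2 := phiF_spec F hF u hu (-1)
  have hm1 : phiF F u (-1) = -1 := by
    have := phiF_add F hF u hu 1 (-1)
    rw [show (1:ℝ) + -1 = 0 by norm_num, phiF_zero F hF u hu, phiF_one F hF u hu] at this
    linarith
  rw [hm1] at h2
  have hnt : phiF F u (-t) = -phiF F u t := by
    have := phiF_add F hF u hu t (-t)
    rw [show t + -t = 0 by ring, phiF_zero F hF u hu] at this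
    linarith
  rw [hnt] at h1
  rw [show t • (-u) = (-t) • u by module, h1]
  have hFnu : F (-u) = F 0 - (F u - F 0) := by
    rw [show -u = (-1 : ℝ) • u by module, h2]; module
  rw [hFnu]
  module

include hF in
/-- scaling functions agree along any two independent timelike directions -/
lemma phiF_eq_indep (u v : Fin (m+2) → ℝ) (hu : 0 < minkG u u) (hv : 0 < minkG v v)
    (hind : Indep u v) (t : ℝ) : phiF F u t = phiF F v t := by
  have hcross := minkG_cross_ne hu hv
  rcases lt_or_gt_of_ne hcross with hlt | hgt
  · apply phiF_eq_adj F hF u v hu hv hind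
    have : minkG (v - u) (v - u) = minkG v v + minkG u u - 2 * minkG u v := by
      rw [minkG_sub_left, minkG_sub_right, minkG_sub_right, minkG_comm v u]; ring
    rw [this]; nlinarith
  · have hnu : 0 < minkG (-u) (-u) := by rwa [minkG_neg_neg]
    have hindn : Indep (-u) v := by
      intro a b h'
      have := hind (-a) b (by linear_combination (norm := module) h')
      exact ⟨by linarith [this.1, neg_eq_zero.mpr this.1], this.2⟩
    rw [← phiF_neg_dir F hF u hu t]
    apply phiF_eq_adj F hF (-u) v hnu hv hindn
    have hsum : minkG (v + u) (v + u) = minkG v v + minkG u u + 2 * minkG u v := by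
      rw [minkG_add_left, minkG_add_right, minkG_add_right, minkG_comm v u]; ring
    rw [sub_neg_eq_add, hsum]; nlinarith

include hF in
lemma phiF_eq_e0 (v : Fin (m+2) → ℝ) (hv : 0 < minkG v v) (t : ℝ) :
    phiF F v t = phiF F (eb (m+2) 0) t := by
  have he0 : 0 < minkG (eb (m+2) 0) (eb (m+2) 0) := by rw [minkG_eb00]; norm_num
  by_cases hind : Indep (eb (m+2) 0) v
  · exact (phiF_eq_indep F hF (eb (m+2) 0) v he0 hv hind t).symm
  · obtain ⟨c, hc⟩ := exists_smul_of_not_indep hind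
      (timelike_ne_zero he0)
    have hcne : c ≠ 0 := by
      rintro rfl; rw [zero_smul] at hc; exact timelike_ne_zero hv hc
    have hw : 0 < minkG (d2v m) (d2v m) := by rw [minkG_d2v]; norm_num
    have hind1 : Indep (eb (m+2) 0) (d2v m) := by
      intro a b h'
      have := indep_eb0_eb1 (m := m) (a + b) (b * (1/2))
        (by rw [d2v] at h'; linear_combination (norm := module) h')
      have hb : b = 0 := by
        rcases mul_eq_zero.mp this.2 with h5 | h5
        · exact h5
        · norm_num at h5
      exact ⟨by linarith [this.1], hb⟩
    have hind2 : Indep (d2v m) v := by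
      intro a b h'
      rw [hc] at h'
      have := indep_eb0_eb1 (m := m) (a + b * c) (a * (1/2))
        (by rw [d2v] at h'; linear_combination (norm := module) h')
      have ha : a = 0 := by
        rcases mul_eq_zero.mp this.2 with h5 | h5
        · exact h5
        · norm_num at h5
      refine ⟨ha, ?_⟩
      have := this.1; rw [ha] at this
      rcases mul_eq_zero.mp (by linarith : b * c = 0) with h5 | h5
      · exact h5
      · exact absurd h5 hcne
    rw [← phiF_eq_indep F hF (d2v m) v hw hv hind2 t,
        ← phiF_eq_indep F hF (eb (m+2) 0) (d2v m) he0 hw hind1 t]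

include hF in
lemma phiF_mul (s t : ℝ) :
    phiF F (eb (m+2) 0) (s * t) = phiF F (eb (m+2) 0) s * phiF F (eb (m+2) 0) t := by
  have he0 : 0 < minkG (eb (m+2) 0) (eb (m+2) 0) := by rw [minkG_eb00]; norm_num
  rcases eq_or_ne t 0 with rfl | ht0
  · rw [mul_zero, phiF_zero F hF _ he0, mul_zero]
  have htv : 0 < minkG (t • eb (m+2) 0) (t • eb (m+2) 0) := by
    rw [minkG_smul_left, minkG_smul_right, minkG_eb00]
    have : 0 < t^2 := by positivity
    nlinarith
  apply phiF_unique F hF _ he0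
  have h1 := phiF_spec F hF (t • eb (m+2) 0) htv s
  have h2 := phiF_spec F hF (eb (m+2) 0) he0 t
  rw [show s • t • eb (m+2) 0 = (s * t) • eb (m+2) 0 by module] at h1
  rw [phiF_eq_e0 F hF (t • eb (m+2) 0) htv s] at h1
  rw [h1, h2]
  module

include hF in
lemma phiF_id (t : ℝ) : phiF F (eb (m+2) 0) t = t := by
  have he0 : 0 < minkG (eb (m+2) 0) (eb (m+2) 0) := by rw [minkG_eb00]; norm_num
  let Φ : ℝ →+* ℝ :=
    { toFun := phiF F (eb (m+2) 0)
      map_one' := phiF_one F hF _ he0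
      map_mul' := phiF_mul F hF
      map_zero' := phiF_zero F hF _ he0
      map_add' := phiF_add F hF _ he0 }
  have : Φ = RingHom.id ℝ := Subsingleton.elim _ _
  exact DFunLike.congr_fun this t

include hF in
lemma smul_timelike_dir (v : Fin (m+2) → ℝ) (hv : 0 < minkG v v) (c : ℝ) :
    F (c • v) - F 0 = c • (F v - F 0) := by
  have h := phiF_spec F hF v hv c
  rw [phiF_eq_e0 F hF v hv c, phiF_id F hF c] at h
  rw [h]; module


end WithF
end TLPA

/-- For `n ≥ 2`, a bijection of Minkowski space `ℝⁿ` mapping every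
timelike (slow) line onto a timelike line is an affine map. -/
theorem timelike_line_preserving_affine (m : ℕ)
    (F : (Fin (m + 2) → ℝ) ≃ (Fin (m + 2) → ℝ))
    (hF : ∀ r v : Fin (m + 2) → ℝ, 0 < minkG v v →
      ∃ r' v' : Fin (m + 2) → ℝ, 0 < minkG v' v' ∧
        F '' {x | ∃ lam : ℝ, x = r + lam • v} = {x | ∃ lam : ℝ, x = r' + lam • v'}) :
    ∃ (A : (Fin (m + 2) → ℝ) →ₗ[ℝ] (Fin (m + 2) → ℝ)) (a : Fin (m + 2) → ℝ),
      ∀ x, F x = A x + a := by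
  have hF' : ∀ r v : Fin (m + 2) → ℝ, 0 < minkG v v →
      ∃ r' v' : Fin (m + 2) → ℝ, 0 < minkG v' v' ∧
        F '' TLPA.lineS r v = TLPA.lineS r' v' := hF
  have hGadd : ∀ x y, (F (x + y) - F 0) = (F x - F 0) + (F y - F 0) := by
    intro x y
    linear_combination (norm := module) TLPA.F_add F hF' x y
  have hGsmul : ∀ (c : ℝ) (x : Fin (m+2) → ℝ), (F (c • x) - F 0) = c • (F x - F 0) := by
    intro c x
    have he0 : 0 < minkG (TLPA.eb (m+2) 0) (TLPA.eb (m+2) 0) := by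
      rw [TLPA.minkG_eb00]; norm_num
    have hneg : 0 < minkG (-(TLPA.eb (m+2) 0)) (-(TLPA.eb (m+2) 0)) := by
      rw [TLPA.minkG_neg_neg]; exact he0
    obtain ⟨T₀, hT₀1, hT⟩ := TLPA.timelike_large hneg x
    set u : Fin (m+2) → ℝ := T₀ • TLPA.eb (m+2) 0 with hudef
    set w : Fin (m+2) → ℝ := x - u with hwdef
    have hu : 0 < minkG u u := by
      rw [hudef, TLPA.minkG_smul_left, TLPA.minkG_smul_right, TLPA.minkG_eb00]
      nlinarith
    have hw : 0 < minkG w w := by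
      have := hT T₀ le_rfl
      rw [show T₀ • (-(TLPA.eb (m+2) 0)) + x = w by rw [hwdef, hudef]; module] at this
      exact this
    have h1 : F (c • x) - F 0 = (F (c • u) - F 0) + (F (c • w) - F 0) := by
      rw [show c • x = c • u + c • w by rw [hwdef]; module]
      exact hGadd (c • u) (c • w)
    have h2 := TLPA.smul_timelike_dir F hF' u hu c
    have h3 := TLPA.smul_timelike_dir F hF' w hw c
    have h4 : F (u + w) - F 0 = (F u - F 0) + (F w - F 0) := hGadd u w
    rw [show u + w = x by rw [hwdef]; module] at h4
    rw [h1, h2, h3, ← smul_add, ← h4]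
  refine ⟨IsLinearMap.mk' (fun x => F x - F 0) ⟨hGadd, hGsmul⟩, F 0, fun x => ?_⟩
  rw [IsLinearMap.mk'_apply]
  module
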